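/- Let G be a tree with vertex set V, and let 𝒱 = {V_1, …, V_k} be a partition of V. Let G' be the graph whose vertices are the connected components of the induced subgraphs G[V_i] (over all i), with two components adjacent iff some edge of G joins them. Then G' is a tree, and the number of edges of G with endpoints in different parts V_i, V_j (i ≠ j) equals |V(G')| − 1, i.e., equals the total number of connected components of all G[V_i] minus 1. -/

import Mathlib

/-- The subgraph of `G` keeping only the edges both of whose endpoints lie in the same
part of the partition given by `p`. -/
def partSubgraph {V ι : Type*} (G : SimpleGraph V) (p : V → ι) : SimpleGraph V where
  Adj u v := G.Adj u v ∧ p u = p v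
  symm := ⟨fun _ _ h => ⟨h.1.symm, h.2.symm⟩⟩
  loopless := ⟨fun u h => G.loopless.irrefl u h.1⟩

/-- The quotient graph `G'`: its vertices are the connected components of the induced
subgraphs `G[V_i]` (i.e. the connected components of `partSubgraph G p`), two components
being adjacent iff some edge of `G` joins them. -/
def quotientGraph {V ι : Type*} (G : SimpleGraph V) (p : V → ι) :
    SimpleGraph (partSubgraph G p).ConnectedComponent where
  Adj c c' := c ≠ c' ∧ ∃ u v, G.Adj u v ∧
    (partSubgraph G p).connectedComponentMk u = c ∧
    (partSubgraph G p).connectedComponentMk v = c'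
  symm := by
    constructor
    rintro c c' ⟨hne, u, v, huv, hu, hv⟩
    exact ⟨hne.symm, v, u, huv.symm, hv, hu⟩
  loopless := ⟨fun c h => h.1 rfl⟩

section Aux

open SimpleGraph

variable {W : Type*}

instance finComps [Finite W] (K : SimpleGraph W) : Finite K.ConnectedComponent :=
  Quot.finite _

/-- Deleting one edge: trichotomy for reachability. -/
lemma reach_del {K : SimpleGraph W} {u v : W} {x y : W} (h : K.Reachable x y) :
    (K \ fromEdgeSet {s(u,v)}).Reachable x y ∨
    ((K \ fromEdgeSet {s(u,v)}).Reachable x u ∧ (K \ fromEdgeSet {s(u,v)}).Reachable v y) ∨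
    ((K \ fromEdgeSet {s(u,v)}).Reachable x v ∧ (K \ fromEdgeSet {s(u,v)}).Reachable u y) := by
  set K' := K \ fromEdgeSet {s(u,v)} with hK'
  obtain ⟨w⟩ := h
  induction w with
  | nil => exact Or.inl (Reachable.refl _)
  | @cons a b c hab q ih =>
    by_cases he : s(a, b) = s(u, v)
    · rw [Sym2.eq_iff] at he
      rcases he with ⟨rfl, rfl⟩ | ⟨rfl, rfl⟩
      · rcases ih with h1 | ⟨h1, h2⟩ | ⟨h1, h2⟩
        · exact Or.inr (Or.inl ⟨Reachable.refl _, h1⟩)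
        · exact Or.inr (Or.inl ⟨Reachable.refl _, h2⟩)
        · exact Or.inl h2
      · rcases ih with h1 | ⟨h1, h2⟩ | ⟨h1, h2⟩
        · exact Or.inr (Or.inr ⟨Reachable.refl _, h1⟩)
        · exact Or.inl h2
        · exact Or.inr (Or.inr ⟨Reachable.refl _, h2⟩)
    · have hab' : K'.Adj a b := by
        rw [hK', sdiff_adj, fromEdgeSet_adj]
        exact ⟨hab, fun hh => he hh.1⟩
      rcases ih with h1 | ⟨h1, h2⟩ | ⟨h1, h2⟩
      · exact Or.inl (hab'.reachable.trans h1)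
      · exact Or.inr (Or.inl ⟨hab'.reachable.trans h1, h2⟩)
      · exact Or.inr (Or.inr ⟨hab'.reachable.trans h1, h2⟩)

open scoped Classical in
/-- The canonical map on components induced by deleting an edge. -/
noncomputable def delMap (K : SimpleGraph W) (u v : W) :
    (K \ fromEdgeSet {s(u,v)}).ConnectedComponent → K.ConnectedComponent ⊕ Unit :=
  fun c => if c = (K \ fromEdgeSet {s(u,v)}).connectedComponentMk v then Sum.inr ()
    else Sum.inl (c.map (Hom.ofLE sdiff_le))

lemma delMap_injective (K : SimpleGraph W) (u v : W) : Function.Injective (delMap K u v) := by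
  set K' := K \ fromEdgeSet {s(u,v)} with hK'
  intro c1 c2 h
  by_cases h1 : c1 = K'.connectedComponentMk v <;>
    by_cases h2 : c2 = K'.connectedComponentMk v
  · rw [h1, h2]
  · unfold delMap at h; rw [if_pos h1, if_neg h2] at h; exact absurd h (by simp)
  · unfold delMap at h; rw [if_neg h1, if_pos h2] at h; exact absurd h (by simp)
  · unfold delMap at h
    rw [if_neg h1, if_neg h2] at h
    simp only [Sum.inl.injEq] at h
    revert h1 h2 h
    refine ConnectedComponent.ind₂ (fun x y h1 h2 h => ?_) c1 c2
    rw [ConnectedComponent.map_mk, ConnectedComponent.map_mk] at h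
    simp only [Hom.ofLE_apply, ConnectedComponent.eq] at h ⊢
    rcases reach_del (u := u) (v := v) h with h' | ⟨ha, hb⟩ | ⟨ha, hb⟩
    · exact h'
    · exact absurd (ConnectedComponent.sound hb.symm) h2
    · exact absurd (ConnectedComponent.sound ha) h1

lemma delMap_surjective {K : SimpleGraph W} {u v : W} (huv : K.Adj u v)
    (hnr : ¬ (K \ fromEdgeSet {s(u,v)}).Reachable u v) :
    Function.Surjective (delMap K u v) := by
  set K' := K \ fromEdgeSet {s(u,v)} with hK'
  rintro (c | ⟨⟩)
  · revert c
    refine ConnectedComponent.ind (fun x => ?_)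
    by_cases hx : K'.connectedComponentMk x = K'.connectedComponentMk v
    · refine ⟨K'.connectedComponentMk u, ?_⟩
      unfold delMap
      rw [if_neg (fun hc => hnr (ConnectedComponent.exact hc))]
      have hxv : K.Reachable x v := Reachable.mono sdiff_le (ConnectedComponent.exact hx)
      simp only [ConnectedComponent.map_mk, Hom.ofLE_apply, Sum.inl.injEq,
        ConnectedComponent.eq]
      exact ConnectedComponent.sound (huv.reachable.trans (hxv.symm))
    · exact ⟨K'.connectedComponentMk x, by unfold delMap; rw [if_neg hx]; simp; rfl⟩
  · exact ⟨K'.connectedComponentMk v, by unfold delMap; rw [if_pos rfl]⟩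

lemma card_comps_del_le [Finite W] (K : SimpleGraph W) (u v : W) :
    Nat.card (K \ fromEdgeSet {s(u,v)}).ConnectedComponent ≤ Nat.card K.ConnectedComponent + 1 := by
  have := Nat.card_le_card_of_injective _ (delMap_injective K u v)
  simpa [Nat.card_sum] using this

lemma card_comps_del_eq [Finite W] {K : SimpleGraph W} {u v : W} (huv : K.Adj u v)
    (hnr : ¬ (K \ fromEdgeSet {s(u,v)}).Reachable u v) :
    Nat.card (K \ fromEdgeSet {s(u,v)}).ConnectedComponent = Nat.card K.ConnectedComponent + 1 := by
  have := Nat.card_eq_of_bijective _ ⟨delMap_injective K u v, delMap_surjective huv hnr⟩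
  simpa [Nat.card_sum] using this

lemma edgeSet_del (K : SimpleGraph W) {u v : W} (h : K.Adj u v) :
    (K \ fromEdgeSet {s(u,v)}).edgeSet = K.edgeSet \ {s(u,v)} := by
  rw [edgeSet_sdiff, edgeSet_fromEdgeSet, edgeSet_sdiff_sdiff_isDiag]

lemma comps_card_bot : Nat.card (⊥ : SimpleGraph W).ConnectedComponent = Nat.card W := by
  refine (Nat.card_eq_of_bijective (connectedComponentMk ⊥) ⟨fun a b h => ?_, ?_⟩).symm
  · exact reachable_bot.mp (ConnectedComponent.exact h)
  · exact ConnectedComponent.ind (fun x => ⟨x, rfl⟩)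

/-- Euler-style counting: `|V| ≤ |E| + #components`, with equality for acyclic graphs. -/
lemma euler_count [Finite W] (K : SimpleGraph W) :
    Nat.card W ≤ K.edgeSet.ncard + Nat.card K.ConnectedComponent ∧
    (K.IsAcyclic → Nat.card W = K.edgeSet.ncard + Nat.card K.ConnectedComponent) := by
  generalize hn : K.edgeSet.ncard = n
  induction n using Nat.strong_induction_on generalizing K with
  | _ n ih =>
  rcases Nat.eq_zero_or_pos n with rfl | hpos
  · have hbot : K = ⊥ := by
      rw [← edgeSet_eq_empty, ← Set.ncard_eq_zero K.edgeSet.toFinite]; exact hn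
    subst hbot
    rw [comps_card_bot]
    exact ⟨by omega, fun _ => by omega⟩
  · have hne : K.edgeSet.Nonempty := by
      rw [Set.nonempty_iff_ne_empty]
      intro h; rw [← Set.ncard_eq_zero K.edgeSet.toFinite] at h; omega
    obtain ⟨e, he⟩ := hne
    induction e with
    | h u v =>
    have hadj : K.Adj u v := he
    have hdel : (K \ fromEdgeSet {s(u,v)}).edgeSet.ncard = n - 1 := by
      rw [edgeSet_del K hadj, Set.ncard_diff_singleton_of_mem he, hn]
    have ihd := ih (n-1) (by omega) _ hdel
    constructor
    · have := card_comps_del_le K u v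
      omega
    · intro hac
      have hbridge : ¬ (K \ fromEdgeSet {s(u,v)}).Reachable u v :=
        ((isAcyclic_iff_forall_adj_isBridge.mp hac) hadj)
      have heq := card_comps_del_eq hadj hbridge
      have hac' : (K \ fromEdgeSet {s(u,v)}).IsAcyclic := by
        intro x c hc
        exact hac (c.mapLe sdiff_le) (hc.mapLe _)
      have := ihd.2 hac'
      omega

lemma card_comps_of_connected [Finite W] {K : SimpleGraph W} (h : K.Connected) :
    Nat.card K.ConnectedComponent = 1 := by
  haveI : Nonempty W := h.nonempty
  haveI : Nonempty K.ConnectedComponent := ⟨K.connectedComponentMk (Classical.arbitrary W)⟩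
  haveI : Subsingleton K.ConnectedComponent :=
    ⟨ConnectedComponent.ind₂ fun v w => ConnectedComponent.sound (h.preconnected v w)⟩
  exact Nat.card_unique

/-- A connected graph with `|V| = |E| + 1` is a tree. -/
lemma isTree_of_connected_of_card [Finite W] {K : SimpleGraph W}
    (hc : K.Connected) (hcard : Nat.card W = K.edgeSet.ncard + 1) : K.IsTree := by
  refine ⟨hc, ?_⟩
  by_contra hac
  rw [isAcyclic_iff_forall_adj_isBridge] at hac
  push_neg at hac
  obtain ⟨u, v, hadj, hnb⟩ := hac
  rw [isBridge_iff] at hnb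
  push_neg at hnb
  have hr : (K \ fromEdgeSet {s(u,v)}).Reachable u v := hnb
  have hconn' : (K \ fromEdgeSet {s(u,v)}).Connected := by
    rw [connected_iff]
    refine ⟨fun x y => ?_, hc.nonempty⟩
    rcases reach_del (u := u) (v := v) (hc.preconnected x y) with h' | ⟨ha, hb⟩ | ⟨ha, hb⟩
    · exact h'
    · exact (ha.trans hr).trans hb
    · exact (ha.trans hr.symm).trans hb
  have h1 := (euler_count (K \ fromEdgeSet {s(u,v)})).1
  rw [card_comps_of_connected hconn'] at h1
  have h2 : (K \ fromEdgeSet {s(u,v)}).edgeSet.ncard = K.edgeSet.ncard - 1 := by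
    rw [edgeSet_del K hadj,
      Set.ncard_diff_singleton_of_mem (K.mem_edgeSet.mpr hadj)]
  have h3 : 0 < K.edgeSet.ncard :=
    (Set.ncard_pos K.edgeSet.toFinite).mpr ⟨_, K.mem_edgeSet.mpr hadj⟩
  omega

variable {V ι : Type*}

lemma part_const {G : SimpleGraph V} {p : V → ι} {x y : V}
    (h : (partSubgraph G p).Reachable x y) : p x = p y := by
  obtain ⟨w⟩ := h
  induction w with
  | nil => rfl
  | cons h q ih => exact h.2.trans ih

lemma quotient_connected {G : SimpleGraph V} (hG : G.Connected) (p : V → ι) :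
    (quotientGraph G p).Connected := by
  rw [connected_iff]
  haveI : Nonempty V := hG.nonempty
  refine ⟨?_, ⟨(partSubgraph G p).connectedComponentMk (Classical.arbitrary V)⟩⟩
  refine ConnectedComponent.ind₂ (fun x y => ?_)
  obtain ⟨w⟩ := hG.preconnected x y
  induction w with
  | nil => exact Reachable.refl _
  | @cons a b c hab q ih =>
    refine Reachable.trans ?_ ih
    by_cases h :
        (partSubgraph G p).connectedComponentMk a = (partSubgraph G p).connectedComponentMk b
    · rw [h]
    · exact SimpleGraph.Adj.reachable ⟨h, a, b, hab, rfl, rfl⟩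

end Aux

open SimpleGraph

/-- If `G` is a tree and `p` describes a partition of its vertices, then the quotient
graph obtained by contracting the connected components of the parts is again a tree, and
the number of edges of `G` whose endpoints lie in different parts equals the total number
of connected components induced by the parts minus one. -/
theorem tree_partition_quotient {V : Type*} [Fintype V] [DecidableEq V]
    {ι : Type*} [DecidableEq ι]
    (G : SimpleGraph V) [DecidableRel G.Adj] (hG : G.IsTree) (p : V → ι) :
    (quotientGraph G p).IsTree ∧
    (G.edgeFinset.filter (fun e => ¬ (Sym2.map p e).IsDiag)).card =
      Nat.card (partSubgraph G p).ConnectedComponent - 1 := by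
  classical
  set H := partSubgraph G p with hH
  set K := quotientGraph G p with hK
  haveI : DecidableRel H.Adj := fun u v => instDecidableAnd
  set D := G.edgeFinset.filter (fun e => ¬ (Sym2.map p e).IsDiag) with hD
  have hsplit : (G.edgeFinset.filter (fun e => (Sym2.map p e).IsDiag)).card +
      D.card = G.edgeFinset.card :=
    Finset.card_filter_add_card_filter_not _
  have hdiag : (G.edgeFinset.filter (fun e => (Sym2.map p e).IsDiag)) = H.edgeFinset := by
    ext e
    induction e with
    | h a b =>
      simp only [Finset.mem_filter, mem_edgeFinset, mem_edgeSet, Sym2.map_pair_eq,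
        Sym2.mk_isDiag_iff]
      exact Iff.rfl
  have hGcard := hG.card_edgeFinset
  have hHac : H.IsAcyclic := by
    intro x c hc
    exact hG.IsAcyclic (c.mapLe (show H ≤ G from fun a b h => h.1)) (hc.mapLe _)
  have hEuler := (euler_count H).2 hHac
  have hHcard : H.edgeSet.ncard = H.edgeFinset.card := by
    rw [← coe_edgeFinset, Set.ncard_coe_finset]
  have hnatV : Nat.card V = Fintype.card V := Nat.card_eq_fintype_card
  have hcross : D.card + 1 = Nat.card H.ConnectedComponent := by
    rw [hdiag] at hsplit
    omega
  have hKconn : K.Connected := quotient_connected hG.isConnected p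
  have hKsub : K.edgeSet ⊆ Sym2.map (H.connectedComponentMk) '' ↑D := by
    intro e he
    induction e with
    | h c c' =>
      rw [mem_edgeSet] at he
      obtain ⟨hne, u, v, huv, hu, hv⟩ := he
      refine ⟨s(u,v), ?_, ?_⟩
      · rw [Finset.mem_coe, hD, Finset.mem_filter, mem_edgeFinset, mem_edgeSet]
        refine ⟨huv, ?_⟩
        rw [Sym2.map_pair_eq, Sym2.mk_isDiag_iff]
        intro hp
        exact hne (hu ▸ hv ▸ SimpleGraph.ConnectedComponent.connectedComponentMk_eq_of_adj (G := H) ⟨huv, hp⟩)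
      · rw [Sym2.map_pair_eq, hu, hv]
  have hKle : K.edgeSet.ncard ≤ D.card := by
    calc K.edgeSet.ncard ≤ (Sym2.map (H.connectedComponentMk) '' ↑D).ncard :=
          Set.ncard_le_ncard hKsub (Set.toFinite _)
      _ ≤ (↑D : Set (Sym2 V)).ncard := Set.ncard_image_le (Set.toFinite _)
      _ = D.card := Set.ncard_coe_finset D
  have hKverts : Nat.card H.ConnectedComponent ≤ K.edgeSet.ncard + 1 := by
    have := (euler_count K).1
    rwa [card_comps_of_connected hKconn] at this
  have hfix : Nat.card (partSubgraph G p).ConnectedComponent = Nat.card H.ConnectedComponent :=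
    rfl
  refine ⟨isTree_of_connected_of_card hKconn (by omega), by omega⟩
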